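/- Let Θ ≥ 0 be a real, let f : [0,1] → ℝ be nonincreasing with 0 ≤ f(α) ≤ Θ for all α, and let g : [0,1] → ℝ be nondecreasing with 0 ≤ g(α) ≤ Θ for all α. If ∫₀¹ (f(α) + g(α)) dα ≥ 2Θ, then f(α) + g(α) ≥ Θ for every α ∈ [0,1]. -/
import Mathlib


/-- Let `Θ ≥ 0`, let `f : [0,1] → ℝ` be nonincreasing with
`0 ≤ f ≤ Θ` on `[0,1]`, and let `g : [0,1] → ℝ` be nondecreasing with `0 ≤ g ≤ Θ` on
`[0,1]`.  If `∫₀¹ (f(α) + g(α)) dα ≥ 2Θ`, then `f(α) + g(α) ≥ Θ` for every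
`α ∈ [0,1]`. -/
theorem stmt12 (Θ : ℝ) (hΘ : 0 ≤ Θ) (f g : ℝ → ℝ)
    (hf : AntitoneOn f (Set.Icc 0 1)) (hg : MonotoneOn g (Set.Icc 0 1))
    (hfb : ∀ α ∈ Set.Icc (0 : ℝ) 1, 0 ≤ f α ∧ f α ≤ Θ)
    (hgb : ∀ α ∈ Set.Icc (0 : ℝ) 1, 0 ≤ g α ∧ g α ≤ Θ)
    (hint : 2 * Θ ≤ ∫ α in (0 : ℝ)..1, (f α + g α)) :
    ∀ α ∈ Set.Icc (0 : ℝ) 1, Θ ≤ f α + g α := by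
  intro α hα
  have huIcc : Set.uIcc (0 : ℝ) 1 = Set.Icc 0 1 := Set.uIcc_of_le zero_le_one
  have hfint : IntervalIntegrable f MeasureTheory.volume 0 1 :=
    (huIcc ▸ hf : AntitoneOn f (Set.uIcc 0 1)).intervalIntegrable
  have hgint : IntervalIntegrable g MeasureTheory.volume 0 1 :=
    (huIcc ▸ hg : MonotoneOn g (Set.uIcc 0 1)).intervalIntegrable
  -- pointwise bound: f β + g β ≤ f α + g α + Θ for β ∈ [0,1]
  have hbnd : ∀ β ∈ Set.Icc (0 : ℝ) 1, f β + g β ≤ f α + g α + Θ := by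
    intro β hβ
    rcases le_total β α with h | h
    · have h1 : g β ≤ g α := hg hβ hα h
      have h2 : f β ≤ Θ := (hfb β hβ).2
      have h3 : 0 ≤ f α := (hfb α hα).1
      linarith
    · have h1 : f β ≤ f α := hf hα hβ h
      have h2 : g β ≤ Θ := (hgb β hβ).2
      have h3 : 0 ≤ g α := (hgb α hα).1
      linarith
  have hle : (∫ β in (0 : ℝ)..1, (f β + g β)) ≤ ∫ _ in (0 : ℝ)..1, (f α + g α + Θ) := by
    apply intervalIntegral.integral_mono_on zero_le_one (hfint.add hgint)
      intervalIntegrable_const hbnd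
  rw [intervalIntegral.integral_const] at hle
  simp at hle
  linarith
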